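/- arXiv:1105.4037 — 2 statements merged into one kernel-verified Lean document; each statement's English description precedes it below -/
import Mathlib

section
/- Let A be a real n×n matrix, B a real n×m matrix, and set d = dim V where V = Span{columns of B, AB, …, A^{n−1}B}. If d < n, then there exists an invertible n×n matrix P such that, writing vectors of ℝⁿ as blocks (x₁, x₂) ∈ ℝᵈ × ℝ^{n−d}, one has P⁻¹AP = [[A₁, A₃],[0, A₂]] and P⁻¹B = [[B₁],[0]], where A₁ is d×d, A₃ is d×(n−d), A₂ is (n−d)×(n−d), B₁ is d×m, and the pair (A₁, B₁) is controllable, i.e. Span{columns of B₁, A₁B₁, …, A₁^{d−1}B₁} = ℝᵈ. -/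
open MeasureTheory Matrix Set
open scoped ENNReal

noncomputable def mexp {ι : Type*} [Fintype ι] [DecidableEq ι] (M : Matrix ι ι ℝ) :
    Matrix ι ι ℝ :=
  NormedSpace.exp M

noncomputable def sol {ι κ : Type*} [Fintype ι] [DecidableEq ι] [Fintype κ]
    (A : Matrix ι ι ℝ) (B : Matrix ι κ ℝ) (x : ι → ℝ) (u : ℝ → κ → ℝ) (t : ℝ) : ι → ℝ :=
  (mexp (t • A)).mulVec x +
    ∫ s in (0:ℝ)..t, (mexp ((t - s) • A)).mulVec (B.mulVec (u s))

noncomputable def lagr {ι κ : Type*} [Fintype ι] [Fintype κ]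
    (W : Matrix ι ι ℝ) (U : Matrix κ κ ℝ) (z : ι → ℝ) (u : κ → ℝ) : ℝ :=
  (1/2) * (z ⬝ᵥ W.mulVec z) + (1/2) * (u ⬝ᵥ U.mulVec u)

noncomputable def lqCost {ι κ : Type*} [Fintype ι] [DecidableEq ι] [Fintype κ]
    (A : Matrix ι ι ℝ) (B : Matrix ι κ ℝ)
    (W : Matrix ι ι ℝ) (U : Matrix κ κ ℝ) (x y : ι → ℝ) : ℝ≥0∞ :=
  ⨅ u : {u : ℝ → κ → ℝ //
      MemLp u 2 (volume.restrict (Set.Icc (0:ℝ) 1)) ∧ sol A B x u 1 = y},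
    ∫⁻ t in Set.Icc (0:ℝ) 1, ENNReal.ofReal (lagr W U (sol A B x u.1 t) (u.1 t))

def kalmanSpan {ι κ : Type*} [Fintype ι] [DecidableEq ι] [Fintype κ]
    (A : Matrix ι ι ℝ) (B : Matrix ι κ ℝ) : Submodule ℝ (ι → ℝ) :=
  Submodule.span ℝ (⋃ k ∈ Finset.range (Fintype.card ι), Set.range (A ^ k * B)ᵀ)

def IsTransportMap {α β : Type*} [MeasurableSpace α] [MeasurableSpace β]
    (μ₀ : Measure α) (μ₁ : Measure β) (T : α → β) : Prop :=
  Measurable T ∧ Measure.map T μ₀ = μ₁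

noncomputable def transportCost {α β : Type*} [MeasurableSpace α]
    (c : α → β → ℝ≥0∞) (μ₀ : Measure α) (T : α → β) : ℝ≥0∞ :=
  ∫⁻ x, c x (T x) ∂μ₀

def IsOptimalMap {α β : Type*} [MeasurableSpace α] [MeasurableSpace β]
    (c : α → β → ℝ≥0∞) (μ₀ : Measure α) (μ₁ : Measure β) (T : α → β) : Prop :=
  IsTransportMap μ₀ μ₁ T ∧
    ∀ S, IsTransportMap μ₀ μ₁ S → transportCost c μ₀ T ≤ transportCost c μ₀ S

def msupp {α : Type*} [TopologicalSpace α] [MeasurableSpace α] (μ : Measure α) : Set α :=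
  {x | ∀ U ∈ nhds x, μ U ≠ 0}

noncomputable def pgrad {ι : Type*} [Fintype ι] [DecidableEq ι]
    (φ : (ι → ℝ) → ℝ) (x : ι → ℝ) : ι → ℝ :=
  fun i => fderiv ℝ φ x (Pi.single i 1)

noncomputable def mcosh {ι : Type*} [Fintype ι] [DecidableEq ι] (M : Matrix ι ι ℝ) :
    Matrix ι ι ℝ :=
  (1/2 : ℝ) • (mexp M + mexp (-M))

noncomputable def msinh {ι : Type*} [Fintype ι] [DecidableEq ι] (M : Matrix ι ι ℝ) :
    Matrix ι ι ℝ :=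
  (1/2 : ℝ) • (mexp M - mexp (-M))


set_option linter.unusedSectionVars false

section KalmanAux

variable {ι κ : Type*} [Fintype ι] [DecidableEq ι] [Fintype κ]

/-- span of the columns of `A ^ k * B`. -/
def kS (A : Matrix ι ι ℝ) (B : Matrix ι κ ℝ) (k : ℕ) : Submodule ℝ (ι → ℝ) :=
  Submodule.span ℝ (Set.range (A ^ k * B)ᵀ)

def kspan (A : Matrix ι ι ℝ) (B : Matrix ι κ ℝ) (j : ℕ) : Submodule ℝ (ι → ℝ) :=
  ⨆ k < j, kS A B k

lemma kalmanSpan_eq_kspan (A : Matrix ι ι ℝ) (B : Matrix ι κ ℝ) :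
    kalmanSpan A B = kspan A B (Fintype.card ι) := by
  rw [kalmanSpan, Submodule.span_iUnion₂, kspan]
  simp [kS, Finset.mem_range]

lemma mul_transpose_col (A : Matrix ι ι ℝ) (C : Matrix ι κ ℝ) :
    (A * C)ᵀ = A.mulVec ∘ Cᵀ := by
  funext j i
  simp [Matrix.transpose_apply, Matrix.mul_apply, Matrix.mulVec, dotProduct]
  rfl

lemma kS_succ (A : Matrix ι ι ℝ) (B : Matrix ι κ ℝ) (k : ℕ) :
    kS A B (k + 1) = (kS A B k).map A.mulVecLin := by
  rw [kS, kS, Submodule.map_span]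
  congr 1
  rw [pow_succ', Matrix.mul_assoc, mul_transpose_col]
  exact Set.range_comp _ _

lemma le_kspan (A : Matrix ι ι ℝ) (B : Matrix ι κ ℝ) {k j : ℕ} (h : k < j) :
    kS A B k ≤ kspan A B j :=
  le_iSup₂ (f := fun k (_ : k < j) => kS A B k) k h

lemma kspan_mono (A : Matrix ι ι ℝ) (B : Matrix ι κ ℝ) {i j : ℕ} (h : i ≤ j) :
    kspan A B i ≤ kspan A B j :=
  iSup₂_le fun k hk => le_kspan A B (lt_of_lt_of_le hk h)

lemma kspan_succ (A : Matrix ι ι ℝ) (B : Matrix ι κ ℝ) (j : ℕ) :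
    kspan A B (j + 1) = kspan A B j ⊔ kS A B j := by
  apply le_antisymm
  · refine iSup₂_le fun k hk => ?_
    rcases Nat.lt_succ_iff_lt_or_eq.1 hk with h | h
    · exact le_sup_of_le_left (le_kspan A B h)
    · subst h; exact le_sup_right
  · exact sup_le (kspan_mono A B (Nat.le_succ j)) (le_kspan A B (Nat.lt_succ_self j))

lemma map_kspan_le (A : Matrix ι ι ℝ) (B : Matrix ι κ ℝ) (j : ℕ) :
    (kspan A B j).map A.mulVecLin ≤ kspan A B (j + 1) := by
  rw [kspan, Submodule.map_iSup]
  refine iSup_le fun k => ?_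
  rw [Submodule.map_iSup]
  refine iSup_le fun hk => ?_
  rw [← kS_succ]
  exact le_kspan A B (Nat.succ_lt_succ hk)

lemma kspan_stab_step (A : Matrix ι ι ℝ) (B : Matrix ι κ ℝ) {j : ℕ}
    (h : kspan A B (j + 1) = kspan A B j) : kspan A B (j + 2) = kspan A B (j + 1) := by
  rw [kspan_succ A B (j + 1)]
  refine sup_eq_left.2 ?_
  rw [kS_succ]
  have h0 : kS A B j ≤ kspan A B j := h ▸ le_kspan A B (Nat.lt_succ_self j)
  exact le_trans (Submodule.map_mono h0) (map_kspan_le A B j)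

lemma kspan_stab (A : Matrix ι ι ℝ) (B : Matrix ι κ ℝ) {j : ℕ}
    (h : kspan A B (j + 1) = kspan A B j) : ∀ l, kspan A B (j + l) = kspan A B j := by
  have h' : ∀ l, kspan A B (j + l + 1) = kspan A B (j + l) := by
    intro l
    induction l with
    | zero => exact h
    | succ l ih => exact kspan_stab_step A B ih
  intro l
  induction l with
  | zero => rfl
  | succ l ih => rw [← Nat.add_assoc, h' l]; exact ih

lemma kspan_growth (A : Matrix ι ι ℝ) (B : Matrix ι κ ℝ) :
    ∀ j, (∀ i, i < j → kspan A B (i + 1) ≠ kspan A B i) →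
      j ≤ Module.finrank ℝ (kspan A B j) := by
  intro j
  induction j with
  | zero => intro _; exact Nat.zero_le _
  | succ j ih =>
    intro h
    have h1 : kspan A B j < kspan A B (j + 1) :=
      lt_of_le_of_ne (kspan_mono A B (Nat.le_succ j)) (Ne.symm (h j (Nat.lt_succ_self j)))
    have h2 := Submodule.finrank_lt_finrank_of_lt h1
    have h3 := ih fun i hi => h i (hi.trans (Nat.lt_succ_self j))
    omega

lemma kspan_eq_of_card_le (A : Matrix ι ι ℝ) (B : Matrix ι κ ℝ) {N : ℕ}
    (hN : Fintype.card ι ≤ N) : kspan A B N = kspan A B (Fintype.card ι) := by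
  by_cases h : ∀ i, i < Fintype.card ι → kspan A B (i + 1) ≠ kspan A B i
  · have h1 : Fintype.card ι ≤ Module.finrank ℝ (kspan A B (Fintype.card ι)) :=
      kspan_growth A B _ h
    have h2 : kspan A B (Fintype.card ι) = ⊤ := by
      apply Submodule.eq_top_of_finrank_eq
      have h4 : Module.finrank ℝ (ι → ℝ) = Fintype.card ι := Module.finrank_fintype_fun_eq_card ℝ
      have h5 := Submodule.finrank_le (kspan A B (Fintype.card ι))
      omega
    have h3 : kspan A B N = ⊤ := top_unique (h2 ▸ kspan_mono A B hN)
    rw [h2, h3]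
  · push_neg at h
    obtain ⟨i, hi, he⟩ := h
    obtain ⟨l1, hl1⟩ := Nat.exists_eq_add_of_le hi.le
    obtain ⟨l2, hl2⟩ := Nat.exists_eq_add_of_le (le_trans hi.le hN)
    rw [hl1, hl2, kspan_stab A B he l2, kspan_stab A B he l1]

lemma kalmanSpan_invariant (A : Matrix ι ι ℝ) (B : Matrix ι κ ℝ) :
    ∀ v ∈ kalmanSpan A B, A.mulVec v ∈ kalmanSpan A B := by
  intro v hv
  rw [kalmanSpan_eq_kspan] at hv ⊢
  have h := map_kspan_le A B (Fintype.card ι)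
  rw [kspan_eq_of_card_le A B (Nat.le_succ _)] at h
  rw [← Matrix.mulVecLin_apply]
  exact h (Submodule.mem_map_of_mem hv)

lemma col_mem_kalmanSpan (A : Matrix ι ι ℝ) (B : Matrix ι κ ℝ)
    (h : 0 < Fintype.card ι) (j : κ) : Bᵀ j ∈ kalmanSpan A B := by
  rw [kalmanSpan_eq_kspan]
  refine le_kspan A B h (show Bᵀ j ∈ Submodule.span ℝ (Set.range (A ^ 0 * B)ᵀ) from ?_)
  rw [pow_zero, Matrix.one_mul]
  exact Submodule.subset_span (Set.mem_range_self j)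



variable {α β γ κ : Type*} [Fintype α] [Fintype β] [Fintype κ]

/-- extend a vector on `α` by zero, transported along `e`. -/
def elimL (e : α ⊕ β ≃ γ) : (α → ℝ) →ₗ[ℝ] (γ → ℝ) where
  toFun x := Sum.elim x 0 ∘ e.symm
  map_add' x y := by funext i; rcases h : e.symm i with s | s <;> simp [h]
  map_smul' c x := by funext i; rcases h : e.symm i with s | s <;> simp [h]

lemma elimL_injective (e : α ⊕ β ≃ γ) : Function.Injective (elimL e) := by
  intro x y hxy
  funext i
  have := congrFun hxy (e (Sum.inl i))
  simpa [elimL] using this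

lemma fromBlocks_mul_elim (A₁ : Matrix α α ℝ) (A₃ : Matrix α β ℝ) (A₂ : Matrix β β ℝ)
    (X : Matrix α κ ℝ) :
    Matrix.fromBlocks A₁ A₃ 0 A₂ * Matrix.of (Sum.elim X 0) =
      Matrix.of (Sum.elim (A₁ * X) 0) := by
  ext s j
  erw [Matrix.mul_apply]
  rcases s with i | i <;>
    simp [Matrix.mul_apply, Fintype.sum_sum_type, Matrix.fromBlocks, Sum.elim]

lemma transpose_reindex_elim (e : α ⊕ β ≃ γ) (X : Matrix α κ ℝ) :
    (Matrix.reindex e (Equiv.refl κ) (Matrix.of (Sum.elim X 0)))ᵀ = elimL e ∘ Xᵀ := by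
  funext j i
  simp only [Matrix.transpose_apply, Matrix.reindex_apply, Matrix.submatrix_apply,
    Function.comp_apply, Equiv.refl_symm, Equiv.refl_apply, Matrix.of_apply]
  show Sum.elim X 0 (e.symm i) j = Sum.elim (Xᵀ j) 0 (e.symm i)
  rcases e.symm i with s | s <;> rfl

lemma basis_mul_repr_eq {n' : ℕ} (b' : Module.Basis (Fin n') ℝ (Fin n' → ℝ)) (v : Fin n' → ℝ)
    (i : Fin n') : ∑ k, b' k i * b'.repr v k = v i := by
  have h := b'.sum_repr v
  calc ∑ k, b' k i * b'.repr v k = (∑ k, b'.repr v k • b' k) i := by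
        rw [Finset.sum_apply]; simp [mul_comm]
    _ = v i := by rw [h]

end KalmanAux

/-- Kalman decomposition in the non-controllable case `d < n`. -/
theorem kalman_decomposition (n m d : ℕ)
    (A : Matrix (Fin n) (Fin n) ℝ) (B : Matrix (Fin n) (Fin m) ℝ)
    (hd : d = Module.finrank ℝ (kalmanSpan A B)) (hdn : d < n) :
    ∃ (P : Matrix (Fin n) (Fin n) ℝ) (A₁ : Matrix (Fin d) (Fin d) ℝ)
      (A₃ : Matrix (Fin d) (Fin (n - d)) ℝ) (A₂ : Matrix (Fin (n - d)) (Fin (n - d)) ℝ)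
      (B₁ : Matrix (Fin d) (Fin m) ℝ),
      IsUnit P ∧
      P⁻¹ * A * P =
        Matrix.reindex (finSumFinEquiv.trans (finCongr (Nat.add_sub_cancel' hdn.le)))
          (finSumFinEquiv.trans (finCongr (Nat.add_sub_cancel' hdn.le)))
          (Matrix.fromBlocks A₁ A₃ 0 A₂) ∧
      P⁻¹ * B =
        Matrix.reindex (finSumFinEquiv.trans (finCongr (Nat.add_sub_cancel' hdn.le)))
          (Equiv.refl (Fin m))
          (Matrix.of (Sum.elim B₁ (0 : Matrix (Fin (n - d)) (Fin m) ℝ))) ∧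
      kalmanSpan A₁ B₁ = ⊤ := by
  have hn : 0 < n := Nat.lt_of_le_of_lt (Nat.zero_le d) hdn
  have hcard : Fintype.card (Fin n) = n := Fintype.card_fin n
  set V := kalmanSpan A B with hVdef
  obtain ⟨q, hq⟩ := Submodule.exists_isCompl V
  have hfinV : Module.finrank ℝ V = d := hd.symm
  have hfinq : Module.finrank ℝ q = n - d := by
    have h1 := Submodule.finrank_add_eq_of_isCompl hq
    rw [Module.finrank_fintype_fun_eq_card, Fintype.card_fin, hfinV] at h1
    omega
  let bp : Module.Basis (Fin d) ℝ V := Module.finBasisOfFinrankEq ℝ V hfinV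
  let bq : Module.Basis (Fin (n - d)) ℝ q := Module.finBasisOfFinrankEq ℝ q hfinq
  let f := Submodule.prodEquivOfIsCompl V q hq
  let b : Module.Basis (Fin d ⊕ Fin (n - d)) ℝ (Fin n → ℝ) := (bp.prod bq).map f
  let e : Fin d ⊕ Fin (n - d) ≃ Fin n :=
    finSumFinEquiv.trans (finCongr (Nat.add_sub_cancel' hdn.le))
  let b' : Module.Basis (Fin n) ℝ (Fin n → ℝ) := b.reindex e
  let P : Matrix (Fin n) (Fin n) ℝ := (Pi.basisFun ℝ (Fin n)).toMatrix b'
  have hP : IsUnit P := by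
    letI := Module.Basis.invertibleToMatrix (Pi.basisFun ℝ (Fin n)) b'
    exact isUnit_of_invertible P
  have hbinl : ∀ j, b (Sum.inl j) ∈ V := by
    intro j
    have h1 : (bp.prod bq) (Sum.inl j) = (bp j, 0) :=
      Prod.ext (Module.Basis.prod_apply_inl_fst bp bq j) (Module.Basis.prod_apply_inl_snd bp bq j)
    have h2 : b (Sum.inl j) = (bp j : Fin n → ℝ) := by
      show f ((bp.prod bq) (Sum.inl j)) = _
      rw [h1]
      simp [f]
    rw [h2]
    exact (bp j).2
  have hrepr0 : ∀ v ∈ V, ∀ i, b.repr v (Sum.inr i) = 0 := by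
    intro v hv i
    have h1 : b.repr v (Sum.inr i) = (bp.prod bq).repr (f.symm v) (Sum.inr i) := by
      simp [b, Module.Basis.map_repr]
    have h2 : f.symm v = ((⟨v, hv⟩ : V), (0 : q)) := by
      apply (V.prodEquivOfIsCompl q hq).symm_apply_eq.2
      simp
    rw [h1, h2, Module.Basis.prod_repr_inr]
    simp
  let M₀ : Matrix (Fin d ⊕ Fin (n - d)) (Fin d ⊕ Fin (n - d)) ℝ :=
    Matrix.of fun s t => b.repr (A.mulVec (b t)) s
  let N₀ : Matrix (Fin d ⊕ Fin (n - d)) (Fin m) ℝ :=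
    Matrix.of fun s j => b.repr (Bᵀ j) s
  let A₁ := M₀.toBlocks₁₁
  let A₃ := M₀.toBlocks₁₂
  let A₂ := M₀.toBlocks₂₂
  let B₁ : Matrix (Fin d) (Fin m) ℝ := Matrix.of fun i j => N₀ (Sum.inl i) j
  have hM₀ : M₀ = Matrix.fromBlocks A₁ A₃ 0 A₂ := by
    rw [← Matrix.fromBlocks_toBlocks M₀]
    have h0 : M₀.toBlocks₂₁ = 0 := by
      ext i j
      show b.repr (A.mulVec (b (Sum.inl j))) (Sum.inr i) = 0
      exact hrepr0 _ (kalmanSpan_invariant A B _ (hbinl j)) i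
    rw [h0]
  have hN₀ : N₀ = Matrix.of (Sum.elim B₁ 0) := by
    ext s j
    rcases s with i | i
    · rfl
    · exact hrepr0 _ (col_mem_kalmanSpan A B (by rw [hcard]; exact hn) j) i
  have hPapp : ∀ i k, P i k = b' k i := by
    intro i k
    simp [P, Module.Basis.toMatrix_apply, Pi.basisFun_repr]
  have hAP : A * P = P * Matrix.reindex e e M₀ := by
    ext i j
    rw [Matrix.mul_apply, Matrix.mul_apply]
    have hL : ∑ k, A i k * P k j = A.mulVec (b' j) i := by
      simp [hPapp, Matrix.mulVec, dotProduct]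
    rw [hL]
    have hR : ∀ k, Matrix.reindex e e M₀ k j = b'.repr (A.mulVec (b' j)) k := by
      intro k
      simp only [Matrix.reindex_apply, Matrix.submatrix_apply, Matrix.of_apply, M₀, b',
        Module.Basis.repr_reindex_apply, Module.Basis.reindex_apply]
    symm
    calc ∑ k, P i k * Matrix.reindex e e M₀ k j
        = ∑ k, b' k i * b'.repr (A.mulVec (b' j)) k :=
          Finset.sum_congr rfl fun k _ => by rw [hPapp, hR]
      _ = A.mulVec (b' j) i := basis_mul_repr_eq b' _ i
  have hBP : B = P * Matrix.reindex e (Equiv.refl (Fin m)) N₀ := by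
    ext i j
    rw [Matrix.mul_apply]
    have hR : ∀ k, Matrix.reindex e (Equiv.refl (Fin m)) N₀ k j = b'.repr (Bᵀ j) k := by
      intro k
      simp only [Matrix.reindex_apply, Matrix.submatrix_apply, Matrix.of_apply, N₀, b',
        Module.Basis.repr_reindex_apply, Module.Basis.reindex_apply, Equiv.refl_symm, Equiv.refl_apply]
    calc B i j = Bᵀ j i := rfl
      _ = ∑ k, b' k i * b'.repr (Bᵀ j) k := (basis_mul_repr_eq b' _ i).symm
      _ = ∑ k, P i k * Matrix.reindex e (Equiv.refl (Fin m)) N₀ k j :=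
          Finset.sum_congr rfl fun k _ => by rw [hPapp, hR]
  have hPdet : IsUnit P.det := (Matrix.isUnit_iff_isUnit_det P).1 hP
  have hMeq : P⁻¹ * A * P = Matrix.reindex e e M₀ := by
    rw [Matrix.mul_assoc, hAP, ← Matrix.mul_assoc, Matrix.nonsing_inv_mul P hPdet,
      Matrix.one_mul]
  have hNeq : P⁻¹ * B = Matrix.reindex e (Equiv.refl (Fin m)) N₀ := by
    rw [hBP, ← Matrix.mul_assoc, Matrix.nonsing_inv_mul P hPdet, Matrix.one_mul]
  have hcols : ∀ k : ℕ, A ^ k * B =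
      P * Matrix.reindex e (Equiv.refl (Fin m)) (Matrix.of (Sum.elim (A₁ ^ k * B₁) 0)) := by
    intro k
    induction k with
    | zero =>
      rw [pow_zero, pow_zero, Matrix.one_mul, Matrix.one_mul, hBP, hN₀]
    | succ k ih =>
      rw [pow_succ', Matrix.mul_assoc, ih, ← Matrix.mul_assoc, hAP, Matrix.mul_assoc]
      congr 1
      rw [Matrix.reindex_apply, Matrix.reindex_apply, Matrix.reindex_apply,
        Matrix.submatrix_mul_equiv]
      congr 1
      rw [hM₀]
      refine (fromBlocks_mul_elim A₁ A₃ A₂ (A₁ ^ k * B₁)).trans ?_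
      exact congrArg (fun M : Matrix (Fin d) (Fin m) ℝ =>
        Matrix.of (Sum.elim M (0 : Matrix (Fin (n - d)) (Fin m) ℝ)))
        (by rw [pow_succ', Matrix.mul_assoc])
  have hkmap : ∀ k : ℕ, Submodule.map (P.mulVecLin ∘ₗ elimL e) (kS A₁ B₁ k) = kS A B k := by
    intro k
    rw [kS, kS, Submodule.map_span]
    congr 1
    have hco : ⇑(P.mulVecLin ∘ₗ elimL e) = P.mulVec ∘ ⇑(elimL e) := by
      funext x
      simp [Matrix.mulVecLin_apply]
    conv_rhs => rw [hcols k, mul_transpose_col, transpose_reindex_elim]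
    rw [hco]
    exact (Set.range_comp (P.mulVec ∘ ⇑(elimL e)) (A₁ ^ k * B₁)ᵀ).symm
  have hVmap : Submodule.map (P.mulVecLin ∘ₗ elimL e) (kspan A₁ B₁ n) = kspan A B n := by
    rw [kspan, kspan, Submodule.map_iSup]
    refine iSup_congr fun k => ?_
    rw [Submodule.map_iSup]
    exact iSup_congr fun hk => hkmap k
  have hinj : Function.Injective ⇑(P.mulVecLin ∘ₗ elimL e) := by
    letI := hP.invertible
    have h1 : Function.Injective ⇑P.mulVecLin := Matrix.mulVec_injective_of_invertible P
    rw [LinearMap.coe_comp]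
    exact h1.comp (elimL_injective e)
  have hfr : Module.finrank ℝ (kspan A₁ B₁ n) = d := by
    have h1 := (Submodule.equivMapOfInjective _ hinj (kspan A₁ B₁ n)).finrank_eq
    rw [hVmap] at h1
    have h2 : kspan A B n = V := by
      rw [hVdef, kalmanSpan_eq_kspan, hcard]
    rw [h1, h2, hfinV]
  have htop : kspan A₁ B₁ n = ⊤ := by
    apply Submodule.eq_top_of_finrank_eq
    rw [hfr, Module.finrank_fintype_fun_eq_card, Fintype.card_fin]
  have hktop : kalmanSpan A₁ B₁ = ⊤ := by
    have hcd : Fintype.card (Fin d) ≤ n := by rw [Fintype.card_fin]; exact hdn.le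
    rw [kalmanSpan_eq_kspan, ← kspan_eq_of_card_le A₁ B₁ hcd, htop]
  exact ⟨P, A₁, A₃, A₂, B₁, hP, by rw [hMeq, hM₀], by rw [hNeq, hN₀]; rfl, hktop⟩
end

section
/- Assume the linear control system ẋ = Ax + Bu is controllable. Set Q₂ = ∫₀¹ (R₂(t)* W R₂(t) + R₄(t)* B U⁻¹ B* R₄(t)) dt. Then the matrices D = R₂(1)⁻¹R₁(1) and F = (R₂(1)⁻¹)* Q₂ R₂(1)⁻¹ are symmetric and positive definite. -/
open MeasureTheory Matrix Set
open scoped ENNReal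

set_option linter.unusedSectionVars false

namespace OCAux

variable {ι κ : Type*} [Fintype ι] [DecidableEq ι] [Fintype κ]

lemma mexp_zero : mexp (0 : Matrix ι ι ℝ) = 1 := NormedSpace.exp_zero

lemma mexp_mul_mexp_neg (C : Matrix ι ι ℝ) : mexp C * mexp (-C) = 1 := by
  rw [mexp, mexp, ← Matrix.exp_add_of_commute C (-C) (Commute.neg_right (Commute.refl C)),
    add_neg_cancel]
  exact NormedSpace.exp_zero

lemma mexp_neg_mul_mexp (C : Matrix ι ι ℝ) : mexp (-C) * mexp C = 1 := by
  rw [mexp, mexp, ← Matrix.exp_add_of_commute (-C) C (Commute.neg_left (Commute.refl C)),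
    neg_add_cancel]
  exact NormedSpace.exp_zero

/-- The linear map `X ↦ (E * X) *ᵥ z`. -/
def matApplyLM (E : Matrix κ ι ℝ) (z : ι → ℝ) : Matrix ι ι ℝ →ₗ[ℝ] (κ → ℝ) where
  toFun X := (E * X) *ᵥ z
  map_add' X Y := by
    show (E * (X + Y)) *ᵥ z = (E * X) *ᵥ z + (E * Y) *ᵥ z
    rw [Matrix.mul_add, Matrix.add_mulVec]
  map_smul' c X := by
    show (E * (c • X)) *ᵥ z = c • ((E * X) *ᵥ z)
    rw [Matrix.mul_smul, Matrix.smul_mulVec]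

/-- The entry linear map. -/
def entryLM (i j : ι) : Matrix ι ι ℝ →ₗ[ℝ] ℝ where
  toFun X := X i j
  map_add' := fun _ _ => rfl
  map_smul' := fun _ _ => rfl

lemma hasDerivAt_mexp_clm {F : Type*} [NormedAddCommGroup F] [NormedSpace ℝ F]
    (f : Matrix ι ι ℝ →ₗ[ℝ] F) (C : Matrix ι ι ℝ) (t : ℝ) :
    HasDerivAt (fun s : ℝ => f (mexp (s • C))) (f (C * mexp (t • C))) t := by
  letI : SeminormedRing (Matrix ι ι ℝ) := Matrix.linftyOpSemiNormedRing
  letI : NormedRing (Matrix ι ι ℝ) := Matrix.linftyOpNormedRing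
  letI : NormedAlgebra ℝ (Matrix ι ι ℝ) := Matrix.linftyOpNormedAlgebra
  have h := hasDerivAt_exp_smul_const' (𝕂 := ℝ) C t
  exact f.toContinuousLinearMap.hasFDerivAt.comp_hasDerivAt t h

lemma hasDerivAt_mulVec_mexp (E : Matrix κ ι ℝ) (C : Matrix ι ι ℝ) (z : ι → ℝ) (t : ℝ) :
    HasDerivAt (fun s : ℝ => (E * mexp (s • C)) *ᵥ z) ((E * (C * mexp (t • C))) *ᵥ z) t := by
  have h := hasDerivAt_mexp_clm (matApplyLM E z) C t
  simpa [matApplyLM, Matrix.mul_assoc] using h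

lemma hasDerivAt_mexp_entry (C : Matrix ι ι ℝ) (i j : ι) (t : ℝ) :
    HasDerivAt (fun s : ℝ => mexp (s • C) i j) ((C * mexp (t • C)) i j) t :=
  hasDerivAt_mexp_clm (entryLM i j) C t

lemma continuous_mexp (C : Matrix ι ι ℝ) : Continuous fun t : ℝ => mexp (t • C) :=
  continuous_matrix fun i j =>
    continuous_iff_continuousAt.2 fun t => (hasDerivAt_mexp_entry C i j t).continuousAt

lemma mexp_comm (C : Matrix ι ι ℝ) (t : ℝ) : C * mexp (t • C) = mexp (t • C) * C := by
  letI : SeminormedRing (Matrix ι ι ℝ) := Matrix.linftyOpSemiNormedRing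
  letI : NormedRing (Matrix ι ι ℝ) := Matrix.linftyOpNormedRing
  letI : NormedAlgebra ℝ (Matrix ι ι ℝ) := Matrix.linftyOpNormedAlgebra
  exact (((Commute.refl C).smul_right t).exp_right).eq

lemma hasDerivAt_dot {f g : ℝ → ι → ℝ} {f' g' : ι → ℝ} {t : ℝ}
    (hf : HasDerivAt f f' t) (hg : HasDerivAt g g' t) :
    HasDerivAt (fun s => f s ⬝ᵥ g s) (f' ⬝ᵥ g t + f t ⬝ᵥ g') t := by
  have h : ∀ i : ι, HasDerivAt (fun s => f s i * g s i) (f' i * g t i + f t i * g' i) t :=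
    fun i => (hasDerivAt_pi.1 hf i).mul (hasDerivAt_pi.1 hg i)
  have hsum := HasDerivAt.fun_sum (fun i (_ : i ∈ Finset.univ) => h i)
  simpa [dotProduct, Finset.sum_add_distrib] using hsum

lemma continuous_dot {f g : ℝ → ι → ℝ} (hf : Continuous f) (hg : Continuous g) :
    Continuous fun t => f t ⬝ᵥ g t := by
  show Continuous fun t => ∑ i, f t i * g t i
  exact continuous_finset_sum _ fun i _ =>
    ((continuous_apply i).comp hf).mul ((continuous_apply i).comp hg)

/-- Transport along a linear ODE: if `g' = -C g` on `[0,1]`, then `exp(sC) g(s)` is constant. -/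
lemma transport (C : Matrix ι ι ℝ) (g g' : ℝ → ι → ℝ)
    (hg : ∀ t, HasDerivAt g (g' t) t) (hg' : Continuous g')
    (hzero : ∀ t ∈ Set.Icc (0:ℝ) 1, C *ᵥ (g t) + g' t = 0) :
    ∀ s ∈ Set.Icc (0:ℝ) 1, (mexp (s • C)) *ᵥ (g s) = g 0 := by
  have hgc : Continuous g := continuous_iff_continuousAt.2 fun t => (hg t).continuousAt
  set N : ℝ → Matrix ι ι ℝ := fun t => mexp (t • C) with hN
  have hNc : Continuous N := continuous_mexp C
  set d : ℝ → ι → ℝ := fun t => (C * N t) *ᵥ (g t) + (N t) *ᵥ (g' t) with hd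
  have hdc : Continuous d := by
    apply Continuous.add
    · exact (continuous_const.matrix_mul hNc).matrix_mulVec hgc
    · exact hNc.matrix_mulVec hg'
  have hy : ∀ t, HasDerivAt (fun s => (N s) *ᵥ (g s)) (d t) t := by
    intro t
    rw [hasDerivAt_pi]
    intro i
    have hsum : HasDerivAt (fun s => ∑ j, N s i j * g s j)
        (∑ j, ((C * N t) i j * g t j + N t i j * g' t j)) t := by
      refine HasDerivAt.fun_sum fun j _ => ?_
      exact (hasDerivAt_mexp_entry C i j t).mul (hasDerivAt_pi.1 (hg t) j)
    have he : d t i = ∑ j, ((C * N t) i j * g t j + N t i j * g' t j) := by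
      simp [hd, Matrix.mulVec, dotProduct, Finset.sum_add_distrib]
    rw [he]
    exact hsum
  have hde : ∀ t ∈ Set.Icc (0:ℝ) 1, d t = 0 := by
    intro t ht
    show (C * mexp (t • C)) *ᵥ (g t) + mexp (t • C) *ᵥ (g' t) = 0
    rw [mexp_comm C t, ← Matrix.mulVec_mulVec, ← Matrix.mulVec_add, hzero t ht,
      Matrix.mulVec_zero]
  intro s hs
  have hint : ∫ t in (0:ℝ)..s, d t = (N s *ᵥ g s) - (N 0 *ᵥ g 0) :=
    intervalIntegral.integral_eq_sub_of_hasDerivAt (fun t _ => hy t)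
      (hdc.intervalIntegrable 0 s)
  have hzero' : ∫ t in (0:ℝ)..s, d t = 0 := by
    rw [intervalIntegral.integral_congr (g := fun _ => 0) ?_, intervalIntegral.integral_zero]
    intro t ht
    rw [Set.uIcc_of_le hs.1] at ht
    exact hde t ⟨ht.1, le_trans ht.2 hs.2⟩
  have h0 : N 0 *ᵥ g 0 = g 0 := by
    rw [hN]
    simp only [zero_smul]
    rw [mexp_zero, Matrix.one_mulVec]
  rw [hzero', h0] at hint
  exact sub_eq_zero.mp hint.symm

namespace OCAux2
open OCAux

/-- the linear functional `u ↦ w ⬝ᵥ u` -/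
def dotLM {ι : Type*} [Fintype ι] (w : ι → ℝ) : (ι → ℝ) →ₗ[ℝ] ℝ where
  toFun u := w ⬝ᵥ u
  map_add' a b := dotProduct_add w a b
  map_smul' c a := by simp [dotProduct_smul]

lemma mulVec_mexp_neg_cancel {ι : Type*} [Fintype ι] [DecidableEq ι]
    (C : Matrix ι ι ℝ) (v : ι → ℝ) : mexp (-C) *ᵥ (mexp C *ᵥ v) = v := by
  rw [Matrix.mulVec_mulVec, mexp_neg_mul_mexp, Matrix.one_mulVec]

lemma ctrl_kill {n m : ℕ} (A : Matrix (Fin n) (Fin n) ℝ) (B : Matrix (Fin n) (Fin m) ℝ)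
    (hctrl : kalmanSpan A B = ⊤) (v : Fin n → ℝ)
    (h : ∀ s ∈ Set.Icc (0:ℝ) 1, Bᵀ *ᵥ ((mexp (s • (-Aᵀ))) *ᵥ v) = 0) : v = 0 := by
  have key : ∀ k : ℕ, ∀ s ∈ Set.Ioo (0:ℝ) 1, (Bᵀ * (Aᵀ)^k * mexp (s • (-Aᵀ))) *ᵥ v = 0 := by
    intro k
    induction k with
    | zero =>
      intro s hs
      have := h s ⟨hs.1.le, hs.2.le⟩
      rw [Matrix.mulVec_mulVec] at this
      simpa [pow_zero, Matrix.mul_one] using this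
    | succ k ih =>
      intro s hs
      have hd := hasDerivAt_mulVec_mexp (Bᵀ * (Aᵀ)^k) (-Aᵀ) v s
      have hzero : (fun t : ℝ => (Bᵀ * (Aᵀ)^k * mexp (t • (-Aᵀ))) *ᵥ v) =ᶠ[nhds s] (fun _ => 0) :=
        Filter.eventually_of_mem (Ioo_mem_nhds hs.1 hs.2) (fun t ht => ih t ht)
      have h0 : HasDerivAt (fun t : ℝ => (Bᵀ * (Aᵀ)^k * mexp (t • (-Aᵀ))) *ᵥ v) 0 s :=
        (hasDerivAt_const s (0 : Fin m → ℝ)).congr_of_eventuallyEq hzero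
      have huniq := hd.unique h0
      have hre : Bᵀ * (Aᵀ)^k * (-Aᵀ * mexp (s • (-Aᵀ))) = -(Bᵀ * (Aᵀ)^(k+1) * mexp (s • (-Aᵀ))) := by
        rw [pow_succ]
        rw [Matrix.neg_mul, Matrix.mul_neg, ← Matrix.mul_assoc, ← Matrix.mul_assoc]
      rw [hre, Matrix.neg_mulVec, neg_eq_zero] at huniq
      exact huniq
  -- evaluate at 1/2
  set w : Fin n → ℝ := mexp ((1/2 : ℝ) • (-Aᵀ)) *ᵥ v with hw
  have hwk : ∀ k : ℕ, (Bᵀ * (Aᵀ)^k) *ᵥ w = 0 := by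
    intro k
    have := key k (1/2) (by norm_num)
    rw [← Matrix.mulVec_mulVec] at this
    exact this
  have horth : ∀ u ∈ kalmanSpan A B, w ⬝ᵥ u = 0 := by
    have hle : kalmanSpan A B ≤ LinearMap.ker (dotLM w) := by
      rw [kalmanSpan, Submodule.span_le]
      intro u hu
      simp only [Set.mem_iUnion] at hu
      obtain ⟨k, _, i₀, rfl⟩ := hu
      show w ⬝ᵥ (A ^ k * B)ᵀ i₀ = 0
      have h1 : w ⬝ᵥ (A ^ k * B)ᵀ i₀ = ((Bᵀ * (Aᵀ)^k) *ᵥ w) i₀ := by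
        rw [show Bᵀ * (Aᵀ)^k = (A^k * B)ᵀ by rw [Matrix.transpose_mul, Matrix.transpose_pow]]
        rw [dotProduct_comm]
        rfl
      rw [h1, hwk k, Pi.zero_apply]
    intro u hu
    exact hle hu
  have hww : w ⬝ᵥ w = 0 := horth w (by rw [hctrl]; trivial)
  have hw0 : w = 0 := dotProduct_self_eq_zero.mp hww
  have : mexp (-((1/2 : ℝ) • (-Aᵀ))) *ᵥ w = v := by
    rw [hw, mulVec_mexp_neg_cancel]
  rw [hw0, Matrix.mulVec_zero] at this
  exact this.symm

end OCAux2

namespace OCCore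
open OCAux OCAux2

variable {n m : ℕ} (A : Matrix (Fin n) (Fin n) ℝ) (B : Matrix (Fin n) (Fin m) ℝ)
  (W : Matrix (Fin n) (Fin n) ℝ) (U : Matrix (Fin m) (Fin m) ℝ)

/-- The Hamiltonian matrix. -/
noncomputable def bigM : Matrix (Fin n ⊕ Fin n) (Fin n ⊕ Fin n) ℝ :=
  Matrix.fromBlocks A (B * U⁻¹ * Bᵀ) W (-Aᵀ)

variable (z : Fin n ⊕ Fin n → ℝ)

noncomputable def rr (t : ℝ) : Fin n ⊕ Fin n → ℝ := mexp (t • bigM A B W U) *ᵥ z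
noncomputable def xx (t : ℝ) : Fin n → ℝ := rr A B W U z t ∘ Sum.inl
noncomputable def pp (t : ℝ) : Fin n → ℝ := rr A B W U z t ∘ Sum.inr
noncomputable def ψψ (t : ℝ) : ℝ :=
  xx A B W U z t ⬝ᵥ (W *ᵥ xx A B W U z t) +
    (Bᵀ *ᵥ pp A B W U z t) ⬝ᵥ (U⁻¹ *ᵥ (Bᵀ *ᵥ pp A B W U z t))

lemma blockv (v : Fin n ⊕ Fin n → ℝ) :
    ((bigM A B W U *ᵥ v) ∘ Sum.inl = A *ᵥ (v ∘ Sum.inl) + (B * U⁻¹ * Bᵀ) *ᵥ (v ∘ Sum.inr)) ∧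
    ((bigM A B W U *ᵥ v) ∘ Sum.inr = W *ᵥ (v ∘ Sum.inl) - Aᵀ *ᵥ (v ∘ Sum.inr)) := by
  unfold bigM
  rw [Matrix.fromBlocks_mulVec]
  constructor
  · rw [Sum.elim_comp_inl]
  · rw [Sum.elim_comp_inr, Matrix.neg_mulVec, sub_eq_add_neg]

lemma hasDerivAt_rr (t : ℝ) :
    HasDerivAt (rr A B W U z) (bigM A B W U *ᵥ rr A B W U z t) t := by
  have h := hasDerivAt_mulVec_mexp (1 : Matrix (Fin n ⊕ Fin n) (Fin n ⊕ Fin n) ℝ)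
    (bigM A B W U) z t
  simp only [Matrix.one_mul] at h
  have : (bigM A B W U * mexp (t • bigM A B W U)) *ᵥ z = bigM A B W U *ᵥ rr A B W U z t := by
    rw [rr, Matrix.mulVec_mulVec]
  rw [← this]
  exact h

lemma hasDerivAt_xx (t : ℝ) :
    HasDerivAt (xx A B W U z)
      (A *ᵥ xx A B W U z t + (B * U⁻¹ * Bᵀ) *ᵥ pp A B W U z t) t := by
  have h := hasDerivAt_rr A B W U z t
  rw [hasDerivAt_pi] at h ⊢
  intro i
  have := h (Sum.inl i)
  have heq := congrFun (blockv A B W U (rr A B W U z t)).1 i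
  rw [Function.comp_apply] at heq
  rw [show (A *ᵥ xx A B W U z t + (B * U⁻¹ * Bᵀ) *ᵥ pp A B W U z t) i
      = (bigM A B W U *ᵥ rr A B W U z t) (Sum.inl i) from heq.symm]
  exact this

lemma hasDerivAt_pp (t : ℝ) :
    HasDerivAt (pp A B W U z)
      (W *ᵥ xx A B W U z t - Aᵀ *ᵥ pp A B W U z t) t := by
  have h := hasDerivAt_rr A B W U z t
  rw [hasDerivAt_pi] at h ⊢
  intro i
  have := h (Sum.inr i)
  have heq := congrFun (blockv A B W U (rr A B W U z t)).2 i
  rw [Function.comp_apply] at heq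
  rw [show (W *ᵥ xx A B W U z t - Aᵀ *ᵥ pp A B W U z t) i
      = (bigM A B W U *ᵥ rr A B W U z t) (Sum.inr i) from heq.symm]
  exact this

lemma continuous_xx : Continuous (xx A B W U z) :=
  continuous_iff_continuousAt.2 fun t => (hasDerivAt_xx A B W U z t).continuousAt

lemma continuous_pp : Continuous (pp A B W U z) :=
  continuous_iff_continuousAt.2 fun t => (hasDerivAt_pp A B W U z t).continuousAt

lemma hasDerivAt_phi (t : ℝ) :
    HasDerivAt (fun s => pp A B W U z s ⬝ᵥ xx A B W U z s) (ψψ A B W U z t) t := by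
  have h := hasDerivAt_dot (hasDerivAt_pp A B W U z t) (hasDerivAt_xx A B W U z t)
  have heq : (W *ᵥ xx A B W U z t - Aᵀ *ᵥ pp A B W U z t) ⬝ᵥ xx A B W U z t +
      pp A B W U z t ⬝ᵥ (A *ᵥ xx A B W U z t + (B * U⁻¹ * Bᵀ) *ᵥ pp A B W U z t)
      = ψψ A B W U z t := by
    set x := xx A B W U z t
    set p := pp A B W U z t
    have h1 : (Aᵀ *ᵥ p) ⬝ᵥ x = p ⬝ᵥ (A *ᵥ x) := by
      rw [Matrix.mulVec_transpose, ← Matrix.dotProduct_mulVec]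
    have h2 : p ⬝ᵥ ((B * U⁻¹ * Bᵀ) *ᵥ p) = (Bᵀ *ᵥ p) ⬝ᵥ (U⁻¹ *ᵥ (Bᵀ *ᵥ p)) := by
      rw [← Matrix.mulVec_mulVec, ← Matrix.mulVec_mulVec, Matrix.dotProduct_mulVec,
        ← Matrix.mulVec_transpose]
    have h3 : (W *ᵥ x) ⬝ᵥ x = x ⬝ᵥ (W *ᵥ x) := dotProduct_comm _ _
    rw [sub_dotProduct, dotProduct_add, h1, h2, h3, ψψ]
    ring
  rw [← heq]
  exact h

lemma continuous_psi : Continuous (ψψ A B W U z) := by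
  apply Continuous.add
  · exact continuous_dot (continuous_xx A B W U z)
      (continuous_const.matrix_mulVec (continuous_xx A B W U z))
  · have hq : Continuous fun t => Bᵀ *ᵥ pp A B W U z t :=
      continuous_const.matrix_mulVec (continuous_pp A B W U z)
    exact continuous_dot hq (continuous_const.matrix_mulVec hq)

variable {W U}

lemma psi_nonneg (hW : W.PosSemidef) (hU : U.PosDef) (t : ℝ) : 0 ≤ ψψ A B W U z t := by
  have h1 : 0 ≤ xx A B W U z t ⬝ᵥ (W *ᵥ xx A B W U z t) := by
    have := hW.dotProduct_mulVec_nonneg (xx A B W U z t)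
    simpa using this
  have h2 : 0 ≤ (Bᵀ *ᵥ pp A B W U z t) ⬝ᵥ (U⁻¹ *ᵥ (Bᵀ *ᵥ pp A B W U z t)) := by
    have := hU.inv.posSemidef.dotProduct_mulVec_nonneg (Bᵀ *ᵥ pp A B W U z t)
    simpa using this
  rw [ψψ]
  linarith

lemma integral_psi_nonneg (hW : W.PosSemidef) (hU : U.PosDef) :
    0 ≤ ∫ t in (0:ℝ)..1, ψψ A B W U z t :=
  intervalIntegral.integral_nonneg zero_le_one (fun u _ => psi_nonneg A B z hW hU u)

lemma integral_psi_eq (hW : W.PosSemidef) (hU : U.PosDef) :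
    ∫ t in (0:ℝ)..1, ψψ A B W U z t
      = pp A B W U z 1 ⬝ᵥ xx A B W U z 1 - pp A B W U z 0 ⬝ᵥ xx A B W U z 0 :=
  intervalIntegral.integral_eq_sub_of_hasDerivAt (fun t _ => hasDerivAt_phi A B W U z t)
    ((continuous_psi A B W U z).intervalIntegrable 0 1)

lemma psi_zero_on_Icc (hW : W.PosSemidef) (hU : U.PosDef)
    (hI : ∫ t in (0:ℝ)..1, ψψ A B W U z t = 0) :
    ∀ t ∈ Set.Icc (0:ℝ) 1, W *ᵥ xx A B W U z t = 0 ∧ Bᵀ *ᵥ pp A B W U z t = 0 := by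
  have hae := (intervalIntegral.integral_eq_zero_iff_of_nonneg_ae
    (Filter.Eventually.of_forall fun t => psi_nonneg A B z hW hU t)
    ((continuous_psi A B W U z).intervalIntegrable 0 1)).mp hI
  have hae' : ψψ A B W U z =ᵐ[volume.restrict (Set.Icc (0:ℝ) 1)] 0 := by
    have hset : ((Set.Ioc (0:ℝ) 1 ∪ Set.Ioc 1 0 : Set ℝ) : Set ℝ) =ᵐ[volume] (Set.Icc (0:ℝ) 1 : Set ℝ) := by
      rw [Set.Ioc_eq_empty (by norm_num : ¬ (1:ℝ) < 0), Set.union_empty]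
      exact MeasureTheory.Ioc_ae_eq_Icc
    rw [← Measure.restrict_congr_set hset]
    exact hae
  have heq : Set.EqOn (ψψ A B W U z) 0 (Set.Icc (0:ℝ) 1) :=
    Measure.eqOn_Icc_of_ae_eq volume (by norm_num : (0:ℝ) ≠ 1) hae'
      (continuous_psi A B W U z).continuousOn continuousOn_const
  intro t ht
  have ht0 : ψψ A B W U z t = 0 := heq ht
  have h1 : 0 ≤ xx A B W U z t ⬝ᵥ (W *ᵥ xx A B W U z t) := by simpa using hW.dotProduct_mulVec_nonneg (xx A B W U z t)
  have h2 : 0 ≤ (Bᵀ *ᵥ pp A B W U z t) ⬝ᵥ (U⁻¹ *ᵥ (Bᵀ *ᵥ pp A B W U z t)) := by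
    simpa using hU.inv.posSemidef.dotProduct_mulVec_nonneg (Bᵀ *ᵥ pp A B W U z t)
  rw [ψψ] at ht0
  constructor
  · have hxz : xx A B W U z t ⬝ᵥ (W *ᵥ xx A B W U z t) = 0 := by linarith
    have := (hW.dotProduct_mulVec_zero_iff (xx A B W U z t)).mp (by simpa using hxz)
    exact this
  · have hqz : (Bᵀ *ᵥ pp A B W U z t) ⬝ᵥ (U⁻¹ *ᵥ (Bᵀ *ᵥ pp A B W U z t)) = 0 := by linarith
    by_contra hne
    have := hU.inv.dotProduct_mulVec_pos (x := Bᵀ *ᵥ pp A B W U z t) hne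
    simp only [star_trivial] at this
    rw [hqz] at this
    exact lt_irrefl 0 this

end OCCore

namespace OCSym
open OCAux

lemma symplectic {n : ℕ} (A S W : Matrix (Fin n) (Fin n) ℝ) (hS : Sᵀ = S) (hW : Wᵀ = W) :
    (mexp (Matrix.fromBlocks A S W (-Aᵀ))).toBlocks₁₁
        * ((mexp (Matrix.fromBlocks A S W (-Aᵀ))).toBlocks₁₂)ᵀ
      = (mexp (Matrix.fromBlocks A S W (-Aᵀ))).toBlocks₁₂
        * ((mexp (Matrix.fromBlocks A S W (-Aᵀ))).toBlocks₁₁)ᵀ := by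
  set M : Matrix (Fin n ⊕ Fin n) (Fin n ⊕ Fin n) ℝ := Matrix.fromBlocks A S W (-Aᵀ) with hM
  set J : Matrix (Fin n ⊕ Fin n) (Fin n ⊕ Fin n) ℝ := Matrix.fromBlocks 0 1 (-1) 0 with hJ
  have hJJ : J * J = -1 := by
    rw [hJ, Matrix.fromBlocks_multiply]
    have h1 : (-1 : Matrix (Fin n ⊕ Fin n) (Fin n ⊕ Fin n) ℝ)
        = Matrix.fromBlocks (-1) 0 0 (-1) := by
      calc (-1 : Matrix (Fin n ⊕ Fin n) (Fin n ⊕ Fin n) ℝ)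
          = -(Matrix.fromBlocks 1 0 0 1) := by rw [Matrix.fromBlocks_one]
        _ = Matrix.fromBlocks (-1) 0 0 (-1) := by rw [Matrix.fromBlocks_neg]; simp
    rw [h1]
    congr 1 <;> simp
  have hJright : J * (-J) = 1 := by rw [Matrix.mul_neg, hJJ, neg_neg]
  have hJinv : J⁻¹ = -J := Matrix.inv_eq_right_inv hJright
  have hJu : IsUnit J := (Matrix.isUnit_iff_isUnit_det J).mpr
    (Matrix.isUnit_det_of_right_inverse hJright)
  have hMT : Mᵀ = J * (-M) * J⁻¹ := by
    rw [hJinv, hM, hJ]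
    rw [show -Matrix.fromBlocks A S W (-Aᵀ) = Matrix.fromBlocks (-A) (-S) (-W) (Aᵀ) by
      rw [Matrix.fromBlocks_neg, neg_neg]]
    rw [show -Matrix.fromBlocks (0 : Matrix (Fin n) (Fin n) ℝ) 1 (-1) 0
        = Matrix.fromBlocks 0 (-1) 1 0 by rw [Matrix.fromBlocks_neg]; simp]
    rw [Matrix.fromBlocks_transpose, Matrix.fromBlocks_multiply, Matrix.fromBlocks_multiply]
    simp [hS, hW]
  have hexpT : (mexp M)ᵀ = J * mexp (-M) * J⁻¹ := by
    have h1 : (mexp M)ᵀ = mexp (Mᵀ) := by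
      rw [mexp, mexp, Matrix.exp_transpose]
    rw [h1, hMT, mexp, mexp, Matrix.exp_conj J (-M) hJu]
  have hmain : mexp M * J * (mexp M)ᵀ = J := by
    rw [hexpT, hJinv]
    have h2 : mexp M * J * (J * mexp (-M) * -J) = mexp M * (J * J) * mexp (-M) * -J := by
      simp only [Matrix.mul_assoc]
    rw [h2, hJJ]
    simp [mul_neg, neg_mul, mul_one, neg_neg, mexp_mul_mexp_neg M]
  -- extraction
  have hRb : mexp M = Matrix.fromBlocks (mexp M).toBlocks₁₁ (mexp M).toBlocks₁₂
      (mexp M).toBlocks₂₁ (mexp M).toBlocks₂₂ := (Matrix.fromBlocks_toBlocks _).symm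
  rw [hRb, hJ, Matrix.fromBlocks_transpose, Matrix.fromBlocks_multiply,
    Matrix.fromBlocks_multiply] at hmain
  have h11 := congrArg Matrix.toBlocks₁₁ hmain
  simp only [Matrix.toBlocks_fromBlocks₁₁, Matrix.mul_zero, Matrix.zero_mul,
    Matrix.mul_one, Matrix.one_mul, Matrix.mul_neg, Matrix.neg_mul, add_zero, zero_add,
    Matrix.add_mul] at h11
  rw [neg_add_eq_zero] at h11
  exact h11.symm

end OCSym

namespace OCMain
open OCAux OCAux2 OCCore OCSym

variable {n m : ℕ} (A : Matrix (Fin n) (Fin n) ℝ) (B : Matrix (Fin n) (Fin m) ℝ)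
  {W : Matrix (Fin n) (Fin n) ℝ} {U : Matrix (Fin m) (Fin m) ℝ}

lemma rr_zero (z : Fin n ⊕ Fin n → ℝ) : rr A B W U z 0 = z := by
  rw [rr, zero_smul, mexp_zero, Matrix.one_mulVec]

lemma xx_zero (z : Fin n ⊕ Fin n → ℝ) : xx A B W U z 0 = z ∘ Sum.inl := by
  rw [xx, rr_zero]

lemma pp_zero (z : Fin n ⊕ Fin n → ℝ) : pp A B W U z 0 = z ∘ Sum.inr := by
  rw [pp, rr_zero]

lemma xx_blocks (z : Fin n ⊕ Fin n → ℝ) (t : ℝ) :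
    xx A B W U z t = (mexp (t • bigM A B W U)).toBlocks₁₁ *ᵥ (z ∘ Sum.inl)
      + (mexp (t • bigM A B W U)).toBlocks₁₂ *ᵥ (z ∘ Sum.inr) := by
  rw [xx, rr]
  conv_lhs => rw [← Matrix.fromBlocks_toBlocks (mexp (t • bigM A B W U))]
  rw [Matrix.fromBlocks_mulVec, Sum.elim_comp_inl]

lemma pp_blocks (z : Fin n ⊕ Fin n → ℝ) (t : ℝ) :
    pp A B W U z t = (mexp (t • bigM A B W U)).toBlocks₂₁ *ᵥ (z ∘ Sum.inl)
      + (mexp (t • bigM A B W U)).toBlocks₂₂ *ᵥ (z ∘ Sum.inr) := by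
  rw [pp, rr]
  conv_lhs => rw [← Matrix.fromBlocks_toBlocks (mexp (t • bigM A B W U))]
  rw [Matrix.fromBlocks_mulVec, Sum.elim_comp_inr]

lemma kernel_chain (hW : W.PosSemidef) (hU : U.PosDef) (hctrl : kalmanSpan A B = ⊤)
    (w : Fin n → ℝ)
    (hI : ∫ t in (0:ℝ)..1, ψψ A B W U (Sum.elim 0 w) t = 0) : w = 0 := by
  set z : Fin n ⊕ Fin n → ℝ := Sum.elim 0 w with hz
  have hzero := psi_zero_on_Icc A B z hW hU hI
  have htrans := transport Aᵀ (pp A B W U z)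
    (fun t => W *ᵥ xx A B W U z t - Aᵀ *ᵥ pp A B W U z t)
    (hasDerivAt_pp A B W U z)
    ((continuous_const.matrix_mulVec (continuous_xx A B W U z)).sub
      (continuous_const.matrix_mulVec (continuous_pp A B W U z)))
    (fun t ht => by
      have habel : Aᵀ *ᵥ pp A B W U z t + (W *ᵥ xx A B W U z t - Aᵀ *ᵥ pp A B W U z t)
          = W *ᵥ xx A B W U z t := by abel
      rw [habel, (hzero t ht).1])
  have hp0 : pp A B W U z 0 = w := by rw [pp_zero, hz, Sum.elim_comp_inr]
  apply ctrl_kill A B hctrl w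
  intro s hs
  have hps : pp A B W U z s = mexp (s • (-Aᵀ)) *ᵥ w := by
    have h1 := htrans s hs
    have h2 := congrArg (fun u => mexp (-(s • Aᵀ)) *ᵥ u) h1
    rw [mulVec_mexp_neg_cancel] at h2
    rw [h2, hp0, smul_neg]
  rw [← hps]
  exact (hzero s hs).2

lemma dot_integral_swap (f : ℝ → Matrix (Fin n) (Fin n) ℝ) (hf : Continuous f)
    (w : Fin n → ℝ) :
    w ⬝ᵥ ((Matrix.of fun i j => ∫ t in (0:ℝ)..1, f t i j) *ᵥ w)
      = ∫ t in (0:ℝ)..1, w ⬝ᵥ (f t *ᵥ w) := by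
  have hic : ∀ i j, IntervalIntegrable (fun t => w i * (f t i j * w j)) MeasureTheory.volume 0 1 :=
    fun i j => (continuous_const.mul ((hf.matrix_elem i j).mul continuous_const)).intervalIntegrable 0 1
  have h1 : w ⬝ᵥ ((Matrix.of fun i j => ∫ t in (0:ℝ)..1, f t i j) *ᵥ w)
      = ∑ i, ∑ j, w i * ((∫ t in (0:ℝ)..1, f t i j) * w j) := by
    simp [dotProduct, Matrix.mulVec, Finset.mul_sum]
  have h2 : ∀ i j, w i * ((∫ t in (0:ℝ)..1, f t i j) * w j)
      = ∫ t in (0:ℝ)..1, w i * (f t i j * w j) := by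
    intro i j
    rw [← intervalIntegral.integral_mul_const, ← intervalIntegral.integral_const_mul]
  have h3 : ∀ i, ∑ j, ∫ t in (0:ℝ)..1, w i * (f t i j * w j)
      = ∫ t in (0:ℝ)..1, ∑ j, w i * (f t i j * w j) := fun i =>
    (intervalIntegral.integral_finset_sum (fun j _ => hic i j)).symm
  have h4 : ∑ i, ∫ t in (0:ℝ)..1, (∑ j, w i * (f t i j * w j))
      = ∫ t in (0:ℝ)..1, ∑ i, ∑ j, w i * (f t i j * w j) :=
    (intervalIntegral.integral_finset_sum (fun i _ =>
      (continuous_finset_sum _ (fun j _ => continuous_const.mul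
        ((hf.matrix_elem i j).mul continuous_const))).intervalIntegrable 0 1)).symm
  rw [h1]
  simp only [h2, h3]
  rw [h4]
  congr 1
  funext t
  simp [dotProduct, Matrix.mulVec, Finset.mul_sum]

lemma mul_cancel_lr (E X Y : Matrix (Fin n) (Fin n) ℝ) (hE : IsUnit E.det)
    (h : E * X * Eᵀ = E * Y * Eᵀ) : X = Y := by
  have hET : IsUnit Eᵀ.det := by rwa [Matrix.det_transpose]
  have key : ∀ Z : Matrix (Fin n) (Fin n) ℝ, E⁻¹ * (E * Z * Eᵀ) * (Eᵀ)⁻¹ = Z := by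
    intro Z
    calc E⁻¹ * (E * Z * Eᵀ) * (Eᵀ)⁻¹ = (E⁻¹ * E) * Z * (Eᵀ * (Eᵀ)⁻¹) := by
          simp only [Matrix.mul_assoc]
      _ = Z := by rw [Matrix.nonsing_inv_mul _ hE, Matrix.mul_nonsing_inv _ hET,
          Matrix.one_mul, Matrix.mul_one]
  have h1 := congrArg (fun Z => E⁻¹ * Z * (Eᵀ)⁻¹) h
  rwa [key X, key Y] at h1

lemma sandwichT {k : ℕ} (Z : Matrix (Fin k) (Fin n) ℝ) (C : Matrix (Fin k) (Fin k) ℝ)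
    (hC : Cᵀ = C) : (Zᵀ * C * Z)ᵀ = Zᵀ * C * Z := by
  rw [Matrix.transpose_mul, Matrix.transpose_mul, Matrix.transpose_transpose, hC,
    ← Matrix.mul_assoc]

noncomputable def integrandQ (W : Matrix (Fin n) (Fin n) ℝ) (U : Matrix (Fin m) (Fin m) ℝ)
    (t : ℝ) : Matrix (Fin n) (Fin n) ℝ :=
  ((mexp (t • bigM A B W U)).toBlocks₁₂)ᵀ * W * (mexp (t • bigM A B W U)).toBlocks₁₂ +
    ((mexp (t • bigM A B W U)).toBlocks₂₂)ᵀ * B * U⁻¹ * Bᵀ *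
      (mexp (t • bigM A B W U)).toBlocks₂₂

lemma main (hW : W.PosSemidef) (hU : U.PosDef) (hctrl : kalmanSpan A B = ⊤)
    (Q₂ D F : Matrix (Fin n) (Fin n) ℝ)
    (hQ₂ : Q₂ = Matrix.of fun i j => ∫ t in (0:ℝ)..1, integrandQ A B W U t i j)
    (hD : D = ((mexp ((1:ℝ) • bigM A B W U)).toBlocks₁₂)⁻¹ *
      (mexp ((1:ℝ) • bigM A B W U)).toBlocks₁₁)
    (hF : F = (((mexp ((1:ℝ) • bigM A B W U)).toBlocks₁₂)⁻¹)ᵀ * Q₂ *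
      ((mexp ((1:ℝ) • bigM A B W U)).toBlocks₁₂)⁻¹) :
    (Dᵀ = D ∧ D.PosDef) ∧ (Fᵀ = F ∧ F.PosDef) := by
  have hUT : Uᵀ = U := by
    rw [← Matrix.conjTranspose_eq_transpose_of_trivial]; exact hU.1
  have hWT : Wᵀ = W := by
    rw [← Matrix.conjTranspose_eq_transpose_of_trivial]; exact hW.1
  have hUinvT : (U⁻¹)ᵀ = U⁻¹ := by rw [Matrix.transpose_nonsing_inv, hUT]
  have hST : (B * U⁻¹ * Bᵀ)ᵀ = B * U⁻¹ * Bᵀ := by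
    rw [Matrix.transpose_mul, Matrix.transpose_mul, Matrix.transpose_transpose, hUinvT,
      ← Matrix.mul_assoc]
  set R1 := (mexp ((1:ℝ) • bigM A B W U)).toBlocks₁₁ with hR1
  set R2 := (mexp ((1:ℝ) • bigM A B W U)).toBlocks₁₂ with hR2
  -- invertibility of R2
  have hx1 : ∀ v : Fin n → ℝ, xx A B W U (Sum.elim 0 v) 1 = R2 *ᵥ v := by
    intro v
    rw [xx_blocks, Sum.elim_comp_inl, Sum.elim_comp_inr, Matrix.mulVec_zero, zero_add]
  have hIeq : ∀ v : Fin n → ℝ, ∫ t in (0:ℝ)..1, ψψ A B W U (Sum.elim 0 v) t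
      = pp A B W U (Sum.elim 0 v) 1 ⬝ᵥ (R2 *ᵥ v) := by
    intro v
    rw [integral_psi_eq A B _ hW hU, hx1, xx_zero, Sum.elim_comp_inl,
      dotProduct_zero, sub_zero]
  have hinj : ∀ v : Fin n → ℝ, R2 *ᵥ v = 0 → v = 0 := by
    intro v hv
    apply kernel_chain A B hW hU hctrl
    rw [hIeq, hv, dotProduct_zero]
  have hdet : IsUnit R2.det := by
    by_contra hcon
    have hdet0 : R2.det = 0 := by
      by_contra hne; exact hcon (Ne.isUnit hne)
    obtain ⟨v, hvne, hv0⟩ := (Matrix.exists_mulVec_eq_zero_iff).mpr hdet0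
    exact hvne (hinj v hv0)
  -- symmetry of Q₂
  have hgsym : ∀ t : ℝ, (integrandQ A B W U t)ᵀ = integrandQ A B W U t := by
    intro t
    rw [integrandQ, Matrix.transpose_add]
    congr 1
    · exact sandwichT _ W hWT
    · have hassoc : ((mexp (t • bigM A B W U)).toBlocks₂₂)ᵀ * B * U⁻¹ * Bᵀ *
          (mexp (t • bigM A B W U)).toBlocks₂₂
          = ((mexp (t • bigM A B W U)).toBlocks₂₂)ᵀ * (B * U⁻¹ * Bᵀ) *
            (mexp (t • bigM A B W U)).toBlocks₂₂ := by
        simp only [Matrix.mul_assoc]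
      rw [hassoc]
      exact sandwichT _ _ hST
  have hQsym : Q₂ᵀ = Q₂ := by
    rw [hQ₂]
    ext i j
    rw [Matrix.transpose_apply, Matrix.of_apply, Matrix.of_apply]
    refine intervalIntegral.integral_congr fun t _ => ?_
    have := congrFun (congrFun (hgsym t) i) j
    rw [Matrix.transpose_apply] at this
    exact this
  -- positivity of the Q₂ quadratic form
  have hRc : Continuous fun t : ℝ => mexp (t • bigM A B W U) := continuous_mexp _
  have hX : Continuous fun t : ℝ => (mexp (t • bigM A B W U)).toBlocks₁₂ :=
    continuous_matrix fun i j => hRc.matrix_elem (Sum.inl i) (Sum.inr j)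
  have hY : Continuous fun t : ℝ => (mexp (t • bigM A B W U)).toBlocks₂₂ :=
    continuous_matrix fun i j => hRc.matrix_elem (Sum.inr i) (Sum.inr j)
  have hcont : Continuous (integrandQ A B W U) := by
    apply Continuous.add
    · exact (hX.matrix_transpose.matrix_mul continuous_const).matrix_mul hX
    · exact ((((hY.matrix_transpose.matrix_mul continuous_const).matrix_mul
        continuous_const).matrix_mul continuous_const).matrix_mul hY)
  have hpoint : ∀ (v : Fin n → ℝ) (t : ℝ),
      v ⬝ᵥ (integrandQ A B W U t *ᵥ v) = ψψ A B W U (Sum.elim 0 v) t := by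
    intro v t
    have hxv : xx A B W U (Sum.elim 0 v) t = (mexp (t • bigM A B W U)).toBlocks₁₂ *ᵥ v := by
      rw [xx_blocks, Sum.elim_comp_inl, Sum.elim_comp_inr, Matrix.mulVec_zero, zero_add]
    have hpv : pp A B W U (Sum.elim 0 v) t = (mexp (t • bigM A B W U)).toBlocks₂₂ *ᵥ v := by
      rw [pp_blocks, Sum.elim_comp_inl, Sum.elim_comp_inr, Matrix.mulVec_zero, zero_add]
    rw [ψψ, hxv, hpv, integrandQ, Matrix.add_mulVec, dotProduct_add]
    congr 1
    · rw [← Matrix.mulVec_mulVec, ← Matrix.mulVec_mulVec,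
        Matrix.dotProduct_mulVec v _ _, Matrix.vecMul_transpose]
    · rw [← Matrix.mulVec_mulVec, ← Matrix.mulVec_mulVec, ← Matrix.mulVec_mulVec,
        ← Matrix.mulVec_mulVec, Matrix.dotProduct_mulVec v _ _, Matrix.vecMul_transpose,
        Matrix.dotProduct_mulVec _ B _, ← Matrix.mulVec_transpose]
  have hQform : ∀ v : Fin n → ℝ,
      v ⬝ᵥ (Q₂ *ᵥ v) = ∫ t in (0:ℝ)..1, ψψ A B W U (Sum.elim 0 v) t := by
    intro v
    calc v ⬝ᵥ (Q₂ *ᵥ v) = ∫ t in (0:ℝ)..1, v ⬝ᵥ (integrandQ A B W U t *ᵥ v) := by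
          rw [hQ₂]; exact dot_integral_swap _ hcont v
      _ = ∫ t in (0:ℝ)..1, ψψ A B W U (Sum.elim 0 v) t :=
          intervalIntegral.integral_congr fun t _ => hpoint v t
  have hQpos : ∀ v : Fin n → ℝ, v ≠ 0 → 0 < v ⬝ᵥ (Q₂ *ᵥ v) := by
    intro v hv
    have h0 : 0 ≤ v ⬝ᵥ (Q₂ *ᵥ v) := by
      rw [hQform]; exact integral_psi_nonneg A B _ hW hU
    rcases h0.lt_or_eq with h | h
    · exact h
    · exfalso
      apply hv
      apply kernel_chain A B hW hU hctrl
      rw [← hQform]; exact h.symm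
  -- symmetry of D
  have hsymp : R1 * R2ᵀ = R2 * R1ᵀ := by
    rw [hR1, hR2, one_smul]
    exact symplectic A (B * U⁻¹ * Bᵀ) W hST hWT
  have hETdet : IsUnit (R2ᵀ).det := by
    rw [Matrix.det_transpose]; exact hdet
  have hDT : Dᵀ = D := by
    have e1 : R2 * Dᵀ * R2ᵀ = R1 * R2ᵀ := by
      rw [hD, Matrix.transpose_mul, Matrix.transpose_nonsing_inv]
      calc R2 * (R1ᵀ * (R2ᵀ)⁻¹) * R2ᵀ = R2 * R1ᵀ * ((R2ᵀ)⁻¹ * R2ᵀ) := by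
            simp only [Matrix.mul_assoc]
        _ = R2 * R1ᵀ := by rw [Matrix.nonsing_inv_mul _ hETdet, Matrix.mul_one]
        _ = R1 * R2ᵀ := hsymp.symm
    have e2 : R2 * D * R2ᵀ = R1 * R2ᵀ := by
      rw [hD]
      calc R2 * (R2⁻¹ * R1) * R2ᵀ = (R2 * R2⁻¹) * (R1 * R2ᵀ) := by
            simp only [Matrix.mul_assoc]
        _ = R1 * R2ᵀ := by rw [Matrix.mul_nonsing_inv _ hdet, Matrix.one_mul]
    exact mul_cancel_lr R2 Dᵀ D hdet (e1.trans e2.symm)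
  -- positivity of D
  have hDv : ∀ v : Fin n → ℝ, v ≠ 0 → 0 < v ⬝ᵥ (D *ᵥ v) := by
    intro v hv
    set z : Fin n ⊕ Fin n → ℝ := Sum.elim v (-(D *ᵥ v)) with hz
    have hx1z : xx A B W U z 1 = 0 := by
      rw [xx_blocks, hz, Sum.elim_comp_inl, Sum.elim_comp_inr]
      have hcanc : R2 *ᵥ ((R2⁻¹ * R1) *ᵥ v) = R1 *ᵥ v := by
        rw [Matrix.mulVec_mulVec, ← Matrix.mul_assoc, Matrix.mul_nonsing_inv _ hdet,
          Matrix.one_mul]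
      rw [Matrix.mulVec_neg, hD, hcanc, add_neg_cancel]
    have hIv : ∫ t in (0:ℝ)..1, ψψ A B W U z t = v ⬝ᵥ (D *ᵥ v) := by
      rw [integral_psi_eq A B z hW hU, hx1z, dotProduct_zero, xx_zero, pp_zero, hz,
        Sum.elim_comp_inl, Sum.elim_comp_inr, neg_dotProduct,
        dotProduct_comm (D *ᵥ v) v]
      ring
    have h0 : 0 ≤ v ⬝ᵥ (D *ᵥ v) := by
      rw [← hIv]; exact integral_psi_nonneg A B z hW hU
    rcases h0.lt_or_eq with h | h
    · exact h
    · exfalso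
      have hz0 := psi_zero_on_Icc A B z hW hU (by rw [hIv]; exact h.symm)
      have htr := transport (-A) (xx A B W U z)
        (fun t => A *ᵥ xx A B W U z t + (B * U⁻¹ * Bᵀ) *ᵥ pp A B W U z t)
        (hasDerivAt_xx A B W U z)
        ((continuous_const.matrix_mulVec (continuous_xx A B W U z)).add
          (continuous_const.matrix_mulVec (continuous_pp A B W U z)))
        (fun t ht => by
          have hb := (hz0 t ht).2
          have hsp : (B * U⁻¹ * Bᵀ) *ᵥ pp A B W U z t = 0 := by
            rw [← Matrix.mulVec_mulVec, ← Matrix.mulVec_mulVec, hb, Matrix.mulVec_zero,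
              Matrix.mulVec_zero]
          show -A *ᵥ xx A B W U z t +
            (A *ᵥ xx A B W U z t + (B * U⁻¹ * Bᵀ) *ᵥ pp A B W U z t) = 0
          rw [hsp, Matrix.neg_mulVec]
          abel)
      have hv1 := htr 1 (by norm_num)
      rw [hx1z, Matrix.mulVec_zero, xx_zero, hz, Sum.elim_comp_inl] at hv1
      exact hv hv1.symm
  have hDpd : D.PosDef := by
    refine Matrix.PosDef.of_dotProduct_mulVec_pos ?_ ?_
    · show Dᴴ = D
      rw [Matrix.conjTranspose_eq_transpose_of_trivial]; exact hDT
    · intro v hv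
      have hstar : star v = v := funext fun i => star_trivial _
      rw [hstar]
      exact hDv v hv
  -- F
  have hFT : Fᵀ = F := by
    rw [hF, Matrix.transpose_mul, Matrix.transpose_mul, Matrix.transpose_transpose, hQsym,
      ← Matrix.mul_assoc]
  have hFpd : F.PosDef := by
    refine Matrix.PosDef.of_dotProduct_mulVec_pos ?_ ?_
    · show Fᴴ = F
      rw [Matrix.conjTranspose_eq_transpose_of_trivial]; exact hFT
    · intro v hv
      have hstar : star v = v := funext fun i => star_trivial _
      rw [hstar]
      have hRw : R2 *ᵥ (R2⁻¹ *ᵥ v) = v := by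
        rw [Matrix.mulVec_mulVec, Matrix.mul_nonsing_inv _ hdet, Matrix.one_mulVec]
      have hwne : R2⁻¹ *ᵥ v ≠ 0 := by
        intro h0; apply hv; rw [← hRw, h0, Matrix.mulVec_zero]
      have hvFv : v ⬝ᵥ (F *ᵥ v) = (R2⁻¹ *ᵥ v) ⬝ᵥ (Q₂ *ᵥ (R2⁻¹ *ᵥ v)) := by
        rw [hF, ← Matrix.mulVec_mulVec, ← Matrix.mulVec_mulVec,
          Matrix.dotProduct_mulVec v _ _, Matrix.vecMul_transpose]
      rw [hvFv]
      exact hQpos _ hwne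
  exact ⟨⟨hDT, hDpd⟩, ⟨hFT, hFpd⟩⟩

end OCMain

end OCAux

/-- in the controllable case, the matrices `D = R₂(1)⁻¹R₁(1)` and
`F = (R₂(1)⁻¹)* Q₂ R₂(1)⁻¹` are symmetric positive definite. -/
theorem D_F_posDef_of_controllable (n m : ℕ)
    (A : Matrix (Fin n) (Fin n) ℝ) (B : Matrix (Fin n) (Fin m) ℝ)
    (W : Matrix (Fin n) (Fin n) ℝ) (hW : W.PosSemidef)
    (U : Matrix (Fin m) (Fin m) ℝ) (hU : U.PosDef)
    (hctrl : kalmanSpan A B = ⊤)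
    (R : ℝ → Matrix (Fin n ⊕ Fin n) (Fin n ⊕ Fin n) ℝ)
    (hR : R = fun t => mexp (t • Matrix.fromBlocks A (B * U⁻¹ * Bᵀ) W (-Aᵀ)))
    (Q₂ D F : Matrix (Fin n) (Fin n) ℝ)
    (hQ₂ : Q₂ = Matrix.of fun i j => ∫ t in (0:ℝ)..1,
      (((R t).toBlocks₁₂)ᵀ * W * (R t).toBlocks₁₂ +
        ((R t).toBlocks₂₂)ᵀ * B * U⁻¹ * Bᵀ * (R t).toBlocks₂₂) i j)
    (hD : D = ((R 1).toBlocks₁₂)⁻¹ * (R 1).toBlocks₁₁)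
    (hF : F = (((R 1).toBlocks₁₂)⁻¹)ᵀ * Q₂ * ((R 1).toBlocks₁₂)⁻¹) :
    (Dᵀ = D ∧ D.PosDef) ∧ (Fᵀ = F ∧ F.PosDef) := by
  subst hR
  exact OCAux.OCMain.main A B hW hU hctrl Q₂ D F (by rw [hQ₂]; rfl) (by rw [hD]; rfl)
    (by rw [hF]; rfl)
end
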